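/- Let T be a finite tree on at least 3 vertices and let G be a finite simple graph with no induced subgraph isomorphic to T. Then every complete expansion 𝕂[G] of G (with arbitrary positive clique sizes m_v) has no induced subgraph isomorphic to T. -/

import Mathlib

open SimpleGraph
open scoped Classical

/-- The lexicographic product `G[H]`. -/
def lexProd {α β : Type*} (G : SimpleGraph α) (H : SimpleGraph β) :
    SimpleGraph (α × β) where
  Adj x y := G.Adj x.1 y.1 ∨ (x.1 = y.1 ∧ H.Adj x.2 y.2)
  symm := by
    refine ⟨?_⟩
    rintro x y (h | ⟨h1, h2⟩)
    · exact Or.inl h.symm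
    · exact Or.inr ⟨h1.symm, h2.symm⟩
  loopless := by
    refine ⟨?_⟩
    rintro x (h | ⟨-, h2⟩)
    · exact G.loopless.irrefl _ h
    · exact H.loopless.irrefl _ h2

/-- `AnnWins G k c`: starting from the partial proper coloring `c`, Ann (who presents
uncolored vertices one at a time) has a strategy so that Ben (who properly colors each
presented vertex with one of `k` colors) can always move, and the whole graph gets colored. -/
inductive AnnWins {V : Type*} (G : SimpleGraph V) (k : ℕ) :
    (V → Option (Fin k)) → Prop
  | done (c : V → Option (Fin k)) (h : ∀ v, (c v).isSome) : AnnWins G k c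
  | step (c : V → Option (Fin k)) (v : V) (hv : c v = none)
      (hex : ∃ col : Fin k, ∀ u, G.Adj u v → c u ≠ some col)
      (h : ∀ col : Fin k, (∀ u, G.Adj u v → c u ≠ some col) →
        AnnWins G k (Function.update c v (some col))) : AnnWins G k c

/-- A graph is `k`-indicated colorable if Ann wins the indicated coloring game
with `k` colors starting from the empty coloring. -/
def IndicatedColorable {V : Type*} (G : SimpleGraph V) (k : ℕ) : Prop :=
  AnnWins G k (fun _ => none)

/-- The indicated chromatic number `χᵢ(G)`. -/
noncomputable def indicatedChromaticNumber {V : Type*} (G : SimpleGraph V) : ℕ :=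
  sInf {k | IndicatedColorable G k}

/-- The coloring number `col(G)`: the least `d` such that every nonempty set `S` of
vertices contains a vertex with fewer than `d` neighbours in `S`. -/
noncomputable def coloringNumber {V : Type*} (G : SimpleGraph V) : ℕ :=
  sInf {d : ℕ | ∀ S : Set V, S.Nonempty → ∃ v ∈ S, {u ∈ S | G.Adj v u}.ncard < d}

/-- `F`-freeness: no induced subgraph of `G` is isomorphic to `F`. -/
def IsFreeOf {α β : Type*} (F : SimpleGraph α) (G : SimpleGraph β) : Prop :=
  IsEmpty (F ↪g G)

/-- The complete expansion of `G`, replacing each vertex `v` by a clique on `m v` vertices. -/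
def completeExpansion {V : Type*} (G : SimpleGraph V) (m : V → ℕ) :
    SimpleGraph (Σ v, Fin (m v)) where
  Adj x y := G.Adj x.1 y.1 ∨ (x.1 = y.1 ∧ x ≠ y)
  symm := by
    refine ⟨?_⟩
    rintro x y (h | ⟨h1, h2⟩)
    · exact Or.inl h.symm
    · exact Or.inr ⟨h1.symm, h2.symm⟩
  loopless := by
    refine ⟨?_⟩
    rintro x (h | ⟨-, h2⟩)
    · exact G.loopless.irrefl _ h
    · exact h2 rfl

/-- The independent expansion of `G`, replacing each vertex `v` by an independent
set of `m v` vertices. -/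
def independentExpansion {V : Type*} (G : SimpleGraph V) (m : V → ℕ) :
    SimpleGraph (Σ v, Fin (m v)) where
  Adj x y := G.Adj x.1 y.1
  symm := ⟨fun _ _ h => h.symm⟩
  loopless := ⟨fun _ h => G.loopless.irrefl _ h⟩

/-- If `T` is a tree on at least 3 vertices and `G` is `T`-free, then every complete
expansion of `G` is `T`-free. -/
theorem completeExpansion_treeFree {V W : Type*} [Fintype V] [Fintype W]
    (T : SimpleGraph W) (hT : T.IsTree) (hW : 3 ≤ Fintype.card W)
    (G : SimpleGraph V) (hG : IsFreeOf T G) (m : V → ℕ) (hm : ∀ v, 0 < m v) :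
    IsFreeOf T (completeExpansion G m) := by
  constructor
  intro f
  set g : W → V := fun w => (f w).1 with hg
  -- key: g is injective
  have hinj : Function.Injective g := by
    intro a b hgab
    by_contra hne
    -- a and b are adjacent in T (same clique, distinct images)
    have hfab : f a ≠ f b := fun h => hne (f.injective h)
    have hab : T.Adj a b := f.map_rel_iff.mp (Or.inr ⟨hgab, hfab⟩)
    -- a triangle in T gives a contradiction
    have tri : ∀ d, d ≠ a → d ≠ b → T.Adj d a → T.Adj d b → False := by
      intro d hda hdb h1 h2
      have hp := hT.IsAcyclic.path_unique (Path.singleton hab)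
        ⟨Walk.cons h1.symm (Path.singleton h2).val,
          (Path.singleton h2).2.cons (by
            simp [Path.singleton, Ne.symm hda, hne])⟩
      have hlen := congrArg (fun p : T.Path a b => p.val.length) hp
      simp [Path.singleton] at hlen
    -- any other vertex is adjacent to a iff to b
    have hiff : ∀ d, d ≠ a → d ≠ b → (T.Adj d a ↔ T.Adj d b) := by
      intro d hda hdb
      by_cases hfd : g d = g a
      · exfalso
        have hfa : f d ≠ f a := fun h => hda (f.injective h)
        have hfb : f d ≠ f b := fun h => hdb (f.injective h)
        have h1 : T.Adj d a := f.map_rel_iff.mp (Or.inr ⟨hfd, hfa⟩)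
        have h2 : T.Adj d b := f.map_rel_iff.mp (Or.inr ⟨hfd.trans hgab, hfb⟩)
        exact tri d hda hdb h1 h2
      · have e1 : T.Adj d a ↔ G.Adj (g d) (g a) := by
          rw [← f.map_rel_iff]
          constructor
          · rintro (h | ⟨h1, -⟩)
            · exact h
            · exact absurd h1 hfd
          · exact Or.inl
        have e2 : T.Adj d b ↔ G.Adj (g d) (g b) := by
          rw [← f.map_rel_iff]
          constructor
          · rintro (h | ⟨h1, -⟩)
            · exact h
            · exact absurd (h1.trans hgab.symm) hfd
          · exact Or.inl
        rw [e1, e2, hgab]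
    -- find a vertex c outside {a, b}
    obtain ⟨c, hca, hcb⟩ : ∃ c, c ≠ a ∧ c ≠ b := by
      by_contra h
      push_neg at h
      have hsub : (Finset.univ : Finset W) ⊆ {a, b} := by
        intro x _
        rcases Classical.em (x = a) with h1 | h1
        · simp [h1]
        · simp [h x h1]
      have h1 := Finset.card_le_card hsub
      rw [Finset.card_univ] at h1
      have h2 : ({a, b} : Finset W).card ≤ 2 :=
        (Finset.card_insert_le _ _).trans (by simp)
      omega
    -- walk from c to a must cross into {a, b}
    obtain ⟨w⟩ := (hT.isConnected c a)
    obtain ⟨d, -, hd1, hd2⟩ := w.exists_boundary_dart ({a, b} : Set W)ᶜ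
      (by simp [hca, hcb]) (by simp)
    have hd1' : d.fst ≠ a ∧ d.fst ≠ b := by simpa using hd1
    have hd2' : d.snd = a ∨ d.snd = b := by
      rcases Classical.em (d.snd = a) with h | h
      · exact Or.inl h
      · exact Or.inr (by simpa [h] using hd2)
    rcases hd2' with h2 | h2
    · have hda : T.Adj d.fst a := h2 ▸ d.adj
      exact tri d.fst hd1'.1 hd1'.2 hda ((hiff d.fst hd1'.1 hd1'.2).mp hda)
    · have hdb : T.Adj d.fst b := h2 ▸ d.adj
      exact tri d.fst hd1'.1 hd1'.2 ((hiff d.fst hd1'.1 hd1'.2).mpr hdb) hdb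
  -- build an embedding T ↪g G
  have emb : T ↪g G :=
    { toFun := g
      inj' := hinj
      map_rel_iff' := by
        intro a b
        constructor
        · intro h
          exact f.map_rel_iff.mp (Or.inl h)
        · intro h
          rcases f.map_rel_iff.mpr h with h' | ⟨h1, -⟩
          · exact h'
          · exact absurd (hinj h1) (T.ne_of_adj h)
        }
  exact hG.false emb
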